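/- Let β̂ = β̂(y, X, Σ) be an LS estimator, i.e. both linearly equivariant (A^{-1} β̂(y, X, Σ) = β̂(y, X A, A Σ A^T) for all invertible d×d matrices A) and scale invariant (β̂(y, X, Σ) = β̂(t y, t X, t² Σ) for all nonzero real t). Then R_V(β̂) = R_{V_u}(β̂), where V_u is the covariance matrix of the model with Σ = I, σ² = 1, and β = η u, for any fixed unit vector u ∈ R^d and η² = β^T Σ β / σ² the signal-to-noise ratio. In particular, R_V(β̂) depends on (β, Σ, σ²) only through the signal-to-noise ratio η² (together with d and n). -/

import Mathlib

open MeasureTheory ProbabilityTheory Matrix Filter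
open scoped ENNReal NNReal Topology

noncomputable section
open scoped Classical

namespace Dicker

/-- Sample space: raw iid standard normal design entries and the error vector. -/
abbrev Omega (n d : ℕ) : Type := (Fin n → Fin d → ℝ) × (Fin n → ℝ)

/-- Law of the raw matrix of iid standard normal entries. -/
def PX (n d : ℕ) : Measure (Fin n → Fin d → ℝ) :=
  Measure.pi fun _ => Measure.pi fun _ => gaussianReal 0 1

/-- Base probability measure of the Gaussian linear model with noise variance `σ2`. -/
def P (n d : ℕ) (σ2 : ℝ≥0) : Measure (Omega n d) :=
  (PX n d).prod (Measure.pi fun _ : Fin n => gaussianReal 0 σ2)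

/-- Square root of a positive semidefinite matrix (junk value `0` otherwise). -/
def msqrt {d : ℕ} (S : Matrix (Fin d) (Fin d) ℝ) : Matrix (Fin d) (Fin d) ℝ :=
  if h : S.PosSemidef then
    (h.1.eigenvectorUnitary : Matrix (Fin d) (Fin d) ℝ) *
      diagonal ((↑) ∘ (Real.sqrt ·) ∘ h.1.eigenvalues) *
      (star h.1.eigenvectorUnitary : Matrix (Fin d) (Fin d) ℝ)
  else 0

lemma msqrt_props {d : ℕ} (S : Matrix (Fin d) (Fin d) ℝ) (h : S.PosSemidef) :
    msqrt S * msqrt S = S ∧ (msqrt S)ᵀ = msqrt S := by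
  rw [msqrt, dif_pos h]
  set U : Matrix (Fin d) (Fin d) ℝ := (h.1.eigenvectorUnitary : Matrix (Fin d) (Fin d) ℝ)
  have hU : star U * U = 1 := Unitary.coe_star_mul_self h.1.eigenvectorUnitary
  have hsp := h.1.spectral_theorem
  rw [Unitary.conjStarAlgAut_apply] at hsp
  constructor
  · simp only [Matrix.mul_assoc]
    rw [← Matrix.mul_assoc (star U) U, hU, Matrix.one_mul, ← Matrix.mul_assoc (diagonal _),
      diagonal_mul_diagonal]
    conv_rhs => rw [hsp]
    simp only [Matrix.mul_assoc]
    congr 3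
    funext i
    simp [Real.mul_self_sqrt (h.eigenvalues_nonneg i)]
  · rw [transpose_mul, transpose_mul, diagonal_transpose, Matrix.star_eq_conjTranspose,
      conjTranspose_eq_transpose_of_trivial, transpose_transpose, Matrix.mul_assoc]

/-- The design matrix `X`, whose rows are iid `N(0, S)`. -/
def dMat {n d : ℕ} (S : Matrix (Fin d) (Fin d) ℝ) (ω : Omega n d) :
    Matrix (Fin n) (Fin d) ℝ :=
  Matrix.of ω.1 * msqrt S

/-- The response vector `y = X β + ε`. -/
def resp {n d : ℕ} (S : Matrix (Fin d) (Fin d) ℝ) (β : Fin d → ℝ) (ω : Omega n d) :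
    Fin n → ℝ :=
  dMat S ω *ᵥ β + ω.2

/-- An estimator of the coefficient vector, a function of the data `(y, X)`. -/
abbrev Estimator (n d : ℕ) : Type :=
  (Fin n → ℝ) → Matrix (Fin n) (Fin d) ℝ → (Fin d → ℝ)

/-- The predictive risk `R_V(est) = σ⁻² E[(est − β)ᵀ Σ (est − β)]`. -/
def risk {d : ℕ} (n : ℕ) (S : Matrix (Fin d) (Fin d) ℝ) (β : Fin d → ℝ) (σ2 : ℝ≥0)
    (est : Estimator n d) : ℝ≥0∞ :=
  (σ2 : ℝ≥0∞)⁻¹ *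
    ∫⁻ ω, ENNReal.ofReal
      ((est (resp S β ω) (dMat S ω) - β) ⬝ᵥ (S *ᵥ (est (resp S β ω) (dMat S ω) - β)))
      ∂(P n d σ2)

/-- The signal-to-noise ratio `η² = βᵀ Σ β / σ²`. -/
def snr {d : ℕ} (S : Matrix (Fin d) (Fin d) ℝ) (β : Fin d → ℝ) (σ2 : ℝ≥0) : ℝ :=
  (β ⬝ᵥ S *ᵥ β) / σ2

/-- The Moore–Penrose pseudoinverse of a square real matrix, characterized by the four
Penrose conditions (which determine it uniquely; it always exists). -/
def pinv {k : ℕ} (A : Matrix (Fin k) (Fin k) ℝ) : Matrix (Fin k) (Fin k) ℝ :=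
  if h : ∃ B, A * B * A = A ∧ B * A * B = B ∧ (A * B)ᵀ = A * B ∧ (B * A)ᵀ = B * A
  then h.choose else 0

/-- The OLS estimator `(XᵀX)⁻ Xᵀ y` (Moore–Penrose pseudoinverse version). -/
def ols {n d : ℕ} : Estimator n d := fun y X => (pinv (Xᵀ * X) * Xᵀ) *ᵥ y

/-- The OLS estimator `(XᵀX)⁻¹ Xᵀ y` (matrix-inverse version). -/
def olsI {n d : ℕ} : Estimator n d := fun y X => ((Xᵀ * X)⁻¹ * Xᵀ) *ᵥ y

/-- The trivial estimator `β̂ = 0`. -/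
def nullEst {n d : ℕ} : Estimator n d := fun _ _ => 0

/-- The James–Stein estimator with shrinkage parameter `λ ∈ [0,∞]`; `β̂_js(∞) = 0`. -/
def jsE {n d : ℕ} (lam : ℝ≥0∞) : Estimator n d :=
  fun y X => if lam = ∞ then 0 else (1 + lam.toReal)⁻¹ • ols y X

/-- The oracle James–Stein shrinkage parameter `λ_js*`. -/
def lamJSStar (n d : ℕ) (e : ℝ) : ℝ≥0∞ :=
  if d + 1 < n then (d : ℝ≥0∞) / (ENNReal.ofReal e * ((n : ℝ≥0∞) - d - 1))
  else if n + 1 < d then (d : ℝ≥0∞) / (ENNReal.ofReal e * ((d : ℝ≥0∞) - n - 1))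
  else ∞

/-- The ridge estimator `(XᵀX + nλΣ)⁻ Xᵀ y` (pseudoinverse version). -/
def ridgeP {n d : ℕ} (S : Matrix (Fin d) (Fin d) ℝ) (lam : ℝ) : Estimator n d :=
  fun y X => (pinv (Xᵀ * X + ((n : ℝ) * lam) • S) * Xᵀ) *ᵥ y

/-- Pseudoinverse ridge estimator with parameter `λ ∈ [0,∞]`; equal to `0` at `λ = ∞`. -/
def ridgePE {n d : ℕ} (S : Matrix (Fin d) (Fin d) ℝ) (lam : ℝ≥0∞) : Estimator n d :=
  fun y X => if lam = ∞ then 0 else ridgeP S lam.toReal y X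

/-- The ridge estimator `(XᵀX + nλΣ)⁻¹ Xᵀ y` (matrix-inverse version). -/
def ridgeI {n d : ℕ} (S : Matrix (Fin d) (Fin d) ℝ) (lam : ℝ) : Estimator n d :=
  fun y X => ((Xᵀ * X + ((n : ℝ) * lam) • S)⁻¹ * Xᵀ) *ᵥ y

/-- Matrix-inverse ridge estimator with parameter `λ ∈ [0,∞]`; equal to `0` at `λ = ∞`. -/
def ridgeIE {n d : ℕ} (S : Matrix (Fin d) (Fin d) ℝ) (lam : ℝ≥0∞) : Estimator n d :=
  fun y X => if lam = ∞ then 0 else ridgeI S lam.toReal y X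

/-- The marginal regression estimator `n⁻¹ Σ⁻¹ Xᵀ y`. -/
def marg {n d : ℕ} (S : Matrix (Fin d) (Fin d) ℝ) : Estimator n d :=
  fun y X => (n : ℝ)⁻¹ • ((S⁻¹ * Xᵀ) *ᵥ y)

/-- Squared Euclidean norm of a vector. -/
def sqnorm {m : ℕ} (v : Fin m → ℝ) : ℝ := ∑ i, (v i) ^ 2

/-- The usual estimator `σ̂² = (n−d)⁻¹ ‖y − X β̂_ols‖²` of the noise variance. -/
def hatSigma2 {n d : ℕ} (y : Fin n → ℝ) (X : Matrix (Fin n) (Fin d) ℝ) : ℝ :=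
  ((n : ℝ) - d)⁻¹ * sqnorm (y - X *ᵥ olsI y X)

/-- The estimator `η̂² = max{‖y‖²/(n σ̂²) − 1, 0}` of the signal-to-noise ratio. -/
def hatEta2 {n d : ℕ} (y : Fin n → ℝ) (X : Matrix (Fin n) (Fin d) ℝ) : ℝ :=
  max (sqnorm y / ((n : ℝ) * hatSigma2 y X) - 1) 0

/-- The adaptive ridge estimator `β̌_r`, with `λ̂_r* = d/(n η̂²)` (equal to `0` when `η̂² = 0`). -/
def adaRidge {n d : ℕ} (S : Matrix (Fin d) (Fin d) ℝ) : Estimator n d :=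
  fun y X => if hatEta2 y X = 0 then 0
    else ridgeI S ((d : ℝ) / ((n : ℝ) * hatEta2 y X)) y X

/-- The adaptive James–Stein estimator `β̌_js`, with `λ̂_js* = d/(η̂²(n−d−1))`
(equal to `0` when `η̂² = 0`). -/
def adaJS {n d : ℕ} : Estimator n d :=
  fun y X => if hatEta2 y X = 0 then 0
    else (1 + (d : ℝ) / (hatEta2 y X * ((n : ℝ) - d - 1)))⁻¹ • olsI y X

/-- Stieltjes transform of the Marčenko–Pastur distribution. -/
def mMP (ρ s : ℝ) : ℝ :=
  -(1 / (2 * ρ * s)) * (s + ρ - 1 + Real.sqrt ((s + ρ - 1) ^ 2 - 4 * ρ * s))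

/-- Closed form of the asymptotic predictive risk of the oracle ridge estimator. -/
def Rr (ρ e : ℝ) : ℝ :=
  (1 / (2 * ρ)) * (e * (ρ - 1) - ρ + Real.sqrt ((e * (ρ - 1) - ρ) ^ 2 + 4 * ρ ^ 2 * e))

/-- The `ℓ²→ℓ²` operator norm of a square real matrix. -/
def opNorm {k : ℕ} (A : Matrix (Fin k) (Fin k) ℝ) : ℝ :=
  ‖Matrix.toEuclideanCLM (𝕜 := ℝ) A‖

/-- Smallest eigenvalue of a Hermitian real matrix (junk value `0` otherwise). -/
def smallestEig {k : ℕ} (S : Matrix (Fin k) (Fin k) ℝ) : ℝ :=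
  if h : S.IsHermitian then ⨅ i, h.eigenvalues i else 0


/-- The oracle ridge shrinkage parameter `λ_r* = d/(n η²)` (in `[0,∞]`). -/
def lamRStar (n d : ℕ) (e : ℝ) : ℝ≥0∞ :=
  (d : ℝ≥0∞) / ((n : ℝ≥0∞) * ENNReal.ofReal e)

/-- Asymptotic predictive risk of a James–Stein estimator with parameter `λ`. -/
def RjsLim (lam ρ e : ℝ) : ℝ := (lam ^ 2 * e + ρ / (1 - ρ)) / (1 + lam) ^ 2

/-- Limiting optimal James–Stein shrinkage parameter `λ_js = ρ/(η²(1−ρ))`. -/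
def lamJSlim (ρ e : ℝ) : ℝ := ρ / (e * (1 - ρ))

/-- Limiting Baranchik shrinkage parameter `λ_bar`. -/
def lamBar (c ρ e : ℝ) : ℝ := c * (1 - ρ) / (e + ρ - c * (1 - ρ))

/-- Baranchik's estimator. -/
def baranchik {n d : ℕ} (c : ℝ) : Estimator n d :=
  fun y X => (1 - c * sqnorm (y - X *ᵥ olsI y X) / sqnorm (X *ᵥ olsI y X)) • olsI y X

/-- The James–Stein estimator with a real shrinkage parameter (matrix-inverse OLS). -/
def jsR {n d : ℕ} (lam : ℝ) : Estimator n d := fun y X => (1 + lam)⁻¹ • olsI y X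

/-- The marginal shrinkage estimator `(1/((1+λ)n)) Σ⁻¹ Xᵀ y`. -/
def margShrink {n d : ℕ} (S : Matrix (Fin d) (Fin d) ℝ) (lam : ℝ) : Estimator n d :=
  fun y X => (1 + lam)⁻¹ • marg S y X

/-- The marginal shrinkage estimator with parameter `λ ∈ [0,∞]`; equal to `0` at `λ = ∞`. -/
def margShrinkE {n d : ℕ} (S : Matrix (Fin d) (Fin d) ℝ) (lam : ℝ≥0∞) : Estimator n d :=
  fun y X => if lam = ∞ then 0 else margShrink S lam.toReal y X

/-- The adaptive marginal shrinkage estimator with `λ̂_m* = d/(n η̂²) + (d+1)/n`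
(equal to `0` when `η̂² = 0`). -/
def adaMargShrink {n d : ℕ} (S : Matrix (Fin d) (Fin d) ℝ) : Estimator n d :=
  fun y X => if hatEta2 y X = 0 then 0
    else margShrink S ((d : ℝ) / ((n : ℝ) * hatEta2 y X) + ((d : ℝ) + 1) / n) y X


section Aux


theorem lintegral_pi_prod {ι : Type*} [Fintype ι] [DecidableEq ι] {α : Type*} [MeasurableSpace α]
    (μ : Measure α) [SigmaFinite μ] (h : ι → α → ℝ≥0∞) (hh : ∀ i, Measurable (h i)) :
    ∫⁻ x, ∏ i, h i (x i) ∂Measure.pi (fun _ : ι => μ) = ∏ i, ∫⁻ y, h i y ∂μ := by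
  have key : ∀ s : Finset ι, ∀ x : ι → α,
      (∫⋯∫⁻_s, (fun y => ∏ i ∈ s, h i (y i)) ∂(fun _ => μ)) x = ∏ i ∈ s, ∫⁻ y, h i y ∂μ := by
    intro s
    induction s using Finset.induction with
    | empty => intro x; simp
    | insert i s hi ih =>
      intro x
      have hmeas : Measurable (fun y : ι → α => ∏ j ∈ insert i s, h j (y j)) :=
        Finset.measurable_prod _ fun j _ => (hh j).comp (measurable_pi_apply j)
      rw [MeasureTheory.lmarginal_insert _ hmeas hi]
      have inner : ∀ t : α, (∫⋯∫⁻_s, (fun y => ∏ j ∈ insert i s, h j (y j)) ∂(fun _ => μ))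
          (Function.update x i t) = h i t * ∏ j ∈ s, ∫⁻ y, h j y ∂μ := by
        intro t
        rw [MeasureTheory.lmarginal]
        have hcoord : ∀ z : ∀ _ : s, α,
            (Function.updateFinset (Function.update x i t) s z) i = t := by
          intro z
          rw [Function.updateFinset]
          simp [hi]
        have : (fun z : ∀ _ : s, α =>
              ∏ j ∈ insert i s, h j (Function.updateFinset (Function.update x i t) s z j)) =
            fun z => h i t * ∏ j ∈ s, h j (Function.updateFinset (Function.update x i t) s z j) := by
          funext z
          rw [Finset.prod_insert hi, hcoord z]
        rw [this, lintegral_const_mul]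
        · rw [show (∫⁻ z : ∀ _ : s, α, ∏ j ∈ s,
              h j (Function.updateFinset (Function.update x i t) s z j)
                ∂Measure.pi fun _ : s => μ) =
            (∫⋯∫⁻_s, (fun y => ∏ j ∈ s, h j (y j)) ∂(fun _ => μ)) (Function.update x i t) from rfl]
          rw [ih]
        · refine Finset.measurable_prod _ fun j _ => (hh j).comp ?_
          by_cases hj : j ∈ s
          · simpa [Function.updateFinset, hj] using
              (measurable_pi_apply (⟨j, hj⟩ : s))
          · simpa [Function.updateFinset, hj] using measurable_const
      simp_rw [inner]
      rw [lintegral_mul_const _ (hh i), Finset.prod_insert hi]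
  rcases isEmpty_or_nonempty α with hα | hα
  · rcases isEmpty_or_nonempty ι with hι | hι
    · simp [Measure.pi_of_empty]
    · have : IsEmpty (ι → α) := by
        exact ⟨fun f => (hα.false (f (Classical.arbitrary ι)))⟩
      rw [lintegral_of_isEmpty]
      have : ∀ i : ι, ∫⁻ y, h i y ∂μ = 0 := fun i => lintegral_of_isEmpty _ _
      rw [Finset.prod_congr rfl fun i _ => this i]
      rcases Finset.univ_nonempty (α := ι) with ⟨i, hi⟩
      rw [Finset.prod_eq_zero hi rfl]
  · rw [MeasureTheory.lintegral_eq_lmarginal_univ (Classical.arbitrary (ι → α))]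
    exact key Finset.univ _

theorem pi_gauss (m : ℕ) : Measure.pi (fun _ : Fin m => gaussianReal 0 1) =
    (volume : Measure (Fin m → ℝ)).withDensity (fun x => ∏ i, gaussianPDF 0 1 (x i)) := by
  refine Measure.pi_eq fun s hs => ?_
  rw [withDensity_apply _ (MeasurableSet.univ_pi hs)]
  rw [MeasureTheory.volume_pi]
  rw [← lintegral_indicator (MeasurableSet.univ_pi hs)]
  have : (Set.univ.pi s).indicator (fun x : Fin m → ℝ => ∏ i, gaussianPDF 0 1 (x i)) =
      fun x => ∏ i, (s i).indicator (gaussianPDF 0 1) (x i) := by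
    funext x
    by_cases hx : x ∈ Set.univ.pi s
    · rw [Set.indicator_of_mem hx]
      refine Finset.prod_congr rfl fun i _ => ?_
      rw [Set.indicator_of_mem (hx i (Set.mem_univ i))]
    · rw [Set.indicator_of_notMem hx]
      rw [Set.mem_univ_pi] at hx
      push_neg at hx
      obtain ⟨i, hi⟩ := hx
      exact (Finset.prod_eq_zero (Finset.mem_univ i) (Set.indicator_of_notMem hi _)).symm
  rw [this, lintegral_pi_prod volume _ (fun i => (measurable_gaussianPDF 0 1).indicator (hs i))]
  refine (Finset.prod_congr rfl fun i _ => ?_).symm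
  rw [gaussianReal_apply 0 one_ne_zero, ← lintegral_indicator (hs i)]


variable {m : ℕ}

theorem dot_conj (B C : Matrix (Fin m) (Fin m) ℝ) (x : Fin m → ℝ) :
    (B *ᵥ x) ⬝ᵥ (C *ᵥ (B *ᵥ x)) = x ⬝ᵥ ((Bᵀ * C * B) *ᵥ x) := by
  rw [dotProduct_mulVec, vecMul_mulVec, ← dotProduct_mulVec, mulVec_mulVec]

theorem measurable_mulVec (A : Matrix (Fin m) (Fin m) ℝ) :
    Measurable fun v : Fin m → ℝ => A *ᵥ v := by
  refine measurable_pi_iff.mpr fun i => ?_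
  simpa [mulVec, dotProduct] using
    Finset.measurable_sum Finset.univ fun j _ => by fun_prop

/-- Measurable equiv given by multiplication by an invertible matrix. -/
def mulVecEquiv (A B : Matrix (Fin m) (Fin m) ℝ) (h1 : A * B = 1) (h2 : B * A = 1) :
    (Fin m → ℝ) ≃ᵐ (Fin m → ℝ) where
  toFun := (A *ᵥ ·)
  invFun := (B *ᵥ ·)
  left_inv := fun v => by
    show B *ᵥ (A *ᵥ v) = v
    rw [mulVec_mulVec, h2, one_mulVec]
  right_inv := fun v => by
    show A *ᵥ (B *ᵥ v) = v
    rw [mulVec_mulVec, h1, one_mulVec]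
  measurable_toFun := measurable_mulVec A
  measurable_invFun := measurable_mulVec B

/-- Householder: an orthogonal matrix mapping `w` to `v` when they have equal norms. -/
theorem householder {v w : Fin m → ℝ} (h : v ⬝ᵥ v = w ⬝ᵥ w) :
    ∃ Q : Matrix (Fin m) (Fin m) ℝ, Qᵀ * Q = 1 ∧ Q *ᵥ w = v := by
  by_cases hvw : v = w
  · exact ⟨1, by simp, by simp [hvw]⟩
  · set u : Fin m → ℝ := w - v with hu
    have hu0 : u ≠ 0 := sub_ne_zero.mpr (Ne.symm hvw)
    set c : ℝ := u ⬝ᵥ u with hc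
    have hc0 : c ≠ 0 := fun h0 => hu0 (dotProduct_self_eq_zero.mp h0)
    set N : Matrix (Fin m) (Fin m) ℝ := vecMulVec u u with hN
    refine ⟨1 - (2 / c) • N, ?_, ?_⟩
    · have hNT : Nᵀ = N := by
        ext i j; simp [hN, vecMulVec, mul_comm]
      have hNN : N * N = c • N := by
        ext i j
        simp only [hN, Matrix.mul_apply, vecMulVec_apply, Matrix.smul_apply, smul_eq_mul, hc,
          dotProduct]
        rw [Finset.sum_congr rfl (fun k _ => by ring : ∀ k ∈ Finset.univ,
          u i * u k * (u k * u j) = (u k * u k) * (u i * u j)), ← Finset.sum_mul]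
      have hQT : (1 - (2 / c) • N)ᵀ = 1 - (2 / c) • N := by
        rw [transpose_sub, transpose_one, transpose_smul, hNT]
      rw [hQT]
      have e1 : ((2 / c) • N) * ((2 / c) • N) = (2 / c + 2 / c) • N := by
        rw [smul_mul_smul_comm, hNN, smul_smul]
        congr 1
        field_simp
        ring
      rw [sub_mul, one_mul, mul_sub, mul_one, e1, add_smul]
      abel
    · have hNw : N *ᵥ w = (u ⬝ᵥ w) • u := by
        ext i
        simp only [hN, mulVec, vecMulVec_apply, dotProduct, Pi.smul_apply, smul_eq_mul]
        rw [Finset.sum_congr rfl (fun k _ => by ring : ∀ k ∈ Finset.univ,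
          u i * u k * w k = (u k * w k) * u i), ← Finset.sum_mul]
      have hcuw : c = 2 * (u ⬝ᵥ w) := by
        simp only [hc, hu, sub_dotProduct, dotProduct_sub]
        rw [dotProduct_comm v w] at *
        nlinarith [h]
      rw [sub_mulVec, one_mulVec, smul_mulVec, hNw, smul_smul]
      have : 2 / c * (u ⬝ᵥ w) = 1 := by
        rw [hcuw]
        have h2 : (2 : ℝ) * (u ⬝ᵥ w) ≠ 0 := hcuw ▸ hc0
        field_simp
        exact div_self (mul_ne_zero_iff.mp h2).2
      rw [this, one_smul, hu]
      abel


theorem map_withDensity_equiv {α β : Type*} [MeasurableSpace α] [MeasurableSpace β]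
    (e : α ≃ᵐ β) (μ : Measure α) (g : α → ℝ≥0∞) (hg : Measurable g) :
    Measure.map e (μ.withDensity g) = (Measure.map e μ).withDensity (g ∘ e.symm) := by
  ext s hs
  rw [Measure.map_apply e.measurable hs, withDensity_apply _ (e.measurable hs),
    withDensity_apply _ hs,
    setLIntegral_map hs (hg.comp e.symm.measurable) e.measurable]
  refine setLIntegral_congr_fun (e.measurable hs) (fun x _ => ?_)
  simp

theorem prod_gaussianPDF_congr {m : ℕ} (y z : Fin m → ℝ) (h : y ⬝ᵥ y = z ⬝ᵥ z) :
    ∏ i, gaussianPDF 0 1 (y i) = ∏ i, gaussianPDF 0 1 (z i) := by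
  have key : ∀ x : Fin m → ℝ, ∏ i, gaussianPDF 0 1 (x i) =
      ENNReal.ofReal (((Real.sqrt (2 * Real.pi * ((1 : ℝ≥0) : ℝ)))⁻¹) ^ m *
        Real.exp (-(x ⬝ᵥ x) / 2)) := by
    intro x
    simp only [gaussianPDF]
    rw [← ENNReal.ofReal_prod_of_nonneg fun i _ => gaussianPDFReal_nonneg 0 1 (x i)]
    congr 1
    simp only [gaussianPDFReal]
    rw [Finset.prod_mul_distrib, Finset.prod_const, ← Real.exp_sum, Finset.card_univ,
      Fintype.card_fin]
    congr 1
    rw [dotProduct]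
    rw [← Finset.sum_neg_distrib, Finset.sum_div]
    exact congrArg Real.exp (Finset.sum_congr rfl fun i _ => by push_cast; ring)
  rw [key y, key z, h]

theorem gauss_rot {m : ℕ} (A : Matrix (Fin m) (Fin m) ℝ) (h1 : Aᵀ * A = 1) :
    Measure.map (fun v : Fin m → ℝ => A *ᵥ v) (Measure.pi fun _ : Fin m => gaussianReal 0 1) =
      Measure.pi fun _ : Fin m => gaussianReal 0 1 := by
  have h2 : A * Aᵀ = 1 := mul_eq_one_comm.mpr h1
  set e := mulVecEquiv A Aᵀ h2 h1 with he
  have hdet : A.det = 1 ∨ A.det = -1 := by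
    have : A.det * A.det = 1 := by
      have := congrArg Matrix.det h1
      rwa [det_mul, det_transpose, det_one] at this
    exact mul_self_eq_one_iff.mp this
  have hdet0 : A.det ≠ 0 := by rcases hdet with h | h <;> rw [h] <;> norm_num
  have hcoe : (fun v : Fin m → ℝ => A *ᵥ v) = ⇑e := rfl
  have hG : Measurable fun x : Fin m → ℝ => ∏ i, gaussianPDF 0 1 (x i) :=
    Finset.measurable_prod _ fun i _ =>
      (measurable_gaussianPDF 0 1).comp (measurable_pi_apply i)
  rw [pi_gauss, hcoe, map_withDensity_equiv e volume _ hG]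
  have hvol : Measure.map (⇑e) (volume : Measure (Fin m → ℝ)) = volume := by
    have hlin : ⇑e = ⇑(Matrix.toLin' A) := funext fun v => (Matrix.toLin'_apply A v).symm
    have hld : LinearMap.det (Matrix.toLin' A) = A.det := LinearMap.det_toLin' A
    rw [hlin, Real.map_linearMap_volume_pi_eq_smul_volume_pi (by rw [hld]; exact hdet0), hld]
    rcases hdet with h | h <;> rw [h] <;> norm_num
  rw [hvol]
  congr 1
  funext x
  show (∏ i, gaussianPDF 0 1 ((Aᵀ *ᵥ x) i)) = ∏ i, gaussianPDF 0 1 (x i)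
  refine prod_gaussianPDF_congr _ _ ?_
  have h3 := dot_conj Aᵀ 1 x
  rw [one_mulVec, transpose_transpose, Matrix.mul_one, h2, one_mulVec] at h3
  exact h3


variable {n d : ℕ}

lemma msqrt_one : msqrt (1 : Matrix (Fin d) (Fin d) ℝ) = 1 := by
  have h1 : (1 : Matrix (Fin d) (Fin d) ℝ).PosSemidef := Matrix.PosSemidef.one
  rw [msqrt, dif_pos h1]
  have hsp := h1.1.spectral_theorem
  rw [Unitary.conjStarAlgAut_apply] at hsp
  set U : Matrix (Fin d) (Fin d) ℝ := (h1.1.eigenvectorUnitary : Matrix (Fin d) (Fin d) ℝ)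
  have hU : star U * U = 1 := Unitary.coe_star_mul_self h1.1.eigenvectorUnitary
  have hU2 : U * star U = 1 := Unitary.coe_mul_star_self h1.1.eigenvectorUnitary
  have hdiag : diagonal (RCLike.ofReal ∘ h1.1.eigenvalues) = (1 : Matrix (Fin d) (Fin d) ℝ) := by
    have := congrArg (fun X => star U * X * U) hsp
    simp only [Matrix.mul_one, hU] at this
    refine Eq.trans ?_ this.symm
    simp only [Matrix.mul_assoc, hU, Matrix.mul_one]
    rw [← Matrix.mul_assoc, hU, Matrix.one_mul]
  have hev : ∀ i, h1.1.eigenvalues i = 1 := by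
    intro i
    have := congrFun (congrFun hdiag i) i
    simpa using this
  have hD : diagonal ((↑) ∘ (Real.sqrt ·) ∘ h1.1.eigenvalues) = (1 : Matrix (Fin d) (Fin d) ℝ) := by
    ext i j
    simp [diagonal_apply, one_apply, hev]
  rw [hD, Matrix.mul_one, hU2]

theorem lintegral_P_scale {n d : ℕ} (σ2 : ℝ≥0) (hσ : 0 < σ2) (f : Omega n d → ℝ≥0∞) :
    ∫⁻ ω, f ω ∂(P n d σ2) =
      ∫⁻ ω, f (ω.1, fun i => Real.sqrt σ2 * ω.2 i) ∂(P n d 1) := by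
  set σ : ℝ := Real.sqrt σ2 with hσdef
  have hσ' : σ ≠ 0 := by
    simp only [hσdef]
    positivity
  let e1 : ℝ ≃ᵐ ℝ := (Homeomorph.mulLeft₀ σ hσ').toMeasurableEquiv
  have he1 : MeasurePreserving ⇑e1 (gaussianReal 0 1) (gaussianReal 0 σ2) := by
    refine ⟨e1.measurable, ?_⟩
    have : ⇑e1 = (σ * ·) := rfl
    rw [this, gaussianReal_map_const_mul]
    congr 1
    · simp
    · ext
      simp [hσdef, Real.sq_sqrt σ2.2]
  let e2 : (Fin n → ℝ) ≃ᵐ (Fin n → ℝ) := MeasurableEquiv.piCongrRight fun _ => e1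
  have he2 : MeasurePreserving ⇑e2 (Measure.pi fun _ : Fin n => gaussianReal 0 1)
      (Measure.pi fun _ : Fin n => gaussianReal 0 σ2) :=
    measurePreserving_pi _ _ fun _ => he1
  haveI : IsProbabilityMeasure (PX n d) := by unfold PX; infer_instance
  let Φ : Omega n d ≃ᵐ Omega n d := (MeasurableEquiv.refl _).prodCongr e2
  have hΦ : MeasurePreserving ⇑Φ (P n d 1) (P n d σ2) :=
    (MeasurePreserving.id (PX n d)).prod he2
  calc ∫⁻ ω, f ω ∂(P n d σ2) = ∫⁻ ω, f ω ∂(Measure.map ⇑Φ (P n d 1)) := by rw [hΦ.map_eq]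
    _ = ∫⁻ ω, f (Φ ω) ∂(P n d 1) := lintegral_map_equiv f Φ
    _ = _ := rfl

theorem lintegral_P_rot {n d : ℕ} (Q : Matrix (Fin d) (Fin d) ℝ) (hQ1 : Qᵀ * Q = 1)
    (f : Omega n d → ℝ≥0∞) :
    ∫⁻ ω, f ω ∂(P n d 1) = ∫⁻ ω, f (fun i => Q *ᵥ ω.1 i, ω.2) ∂(P n d 1) := by
  have hQ2 : Q * Qᵀ = 1 := mul_eq_one_comm.mpr hQ1
  let eQ : (Fin d → ℝ) ≃ᵐ (Fin d → ℝ) := mulVecEquiv Q Qᵀ hQ2 hQ1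
  have heQ : MeasurePreserving ⇑eQ (Measure.pi fun _ : Fin d => gaussianReal 0 1)
      (Measure.pi fun _ : Fin d => gaussianReal 0 1) := ⟨eQ.measurable, gauss_rot Q hQ1⟩
  let Ψ : (Fin n → Fin d → ℝ) ≃ᵐ (Fin n → Fin d → ℝ) :=
    MeasurableEquiv.piCongrRight fun _ => eQ
  have hΨ : MeasurePreserving ⇑Ψ (PX n d) (PX n d) := measurePreserving_pi _ _ fun _ => heQ
  haveI : IsProbabilityMeasure (PX n d) := by unfold PX; infer_instance
  let Φ : Omega n d ≃ᵐ Omega n d := Ψ.prodCongr (MeasurableEquiv.refl _)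
  have hΦ : MeasurePreserving ⇑Φ (P n d 1) (P n d 1) :=
    hΨ.prod (MeasurePreserving.id _)
  calc ∫⁻ ω, f ω ∂(P n d 1) = ∫⁻ ω, f ω ∂(Measure.map ⇑Φ (P n d 1)) := by rw [hΦ.map_eq]
    _ = ∫⁻ ω, f (Φ ω) ∂(P n d 1) := lintegral_map_equiv f Φ
    _ = _ := rfl

end Aux


theorem riskA {n d : ℕ} (S : Matrix (Fin d) (Fin d) ℝ) (hS : S.PosDef)
    (β : Fin d → ℝ) (σ2 : ℝ≥0)
    (est : (Fin n → ℝ) → Matrix (Fin n) (Fin d) ℝ →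
      Matrix (Fin d) (Fin d) ℝ → (Fin d → ℝ))
    (hequiv : ∀ (A : Matrix (Fin d) (Fin d) ℝ), IsUnit A →
      ∀ (y : Fin n → ℝ) (X : Matrix (Fin n) (Fin d) ℝ) (T : Matrix (Fin d) (Fin d) ℝ),
        A⁻¹ *ᵥ est y X T = est y (X * A) (A * T * Aᵀ)) :
    risk n S β σ2 (fun y X => est y X S) =
      risk n 1 (msqrt S *ᵥ β) σ2 (fun y X => est y X 1) := by
  set M := msqrt S with hMdef
  have hpsd := hS.posSemidef
  have hMM : M * M = S := (msqrt_props S hpsd).1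
  have hMH : Mᵀ = M := (msqrt_props S hpsd).2
  have hMdet : M.det ≠ 0 := by
    intro h0
    have : S.det = 0 := by rw [← hMM, det_mul, h0, mul_zero]
    exact hS.det_pos.ne' this
  have hMunit : IsUnit M := (Matrix.isUnit_iff_isUnit_det M).mpr (Ne.isUnit hMdet)
  have hMinv : M⁻¹ * M = 1 := Matrix.nonsing_inv_mul M (Ne.isUnit hMdet)
  have hMinv2 : M * M⁻¹ = 1 := Matrix.mul_nonsing_inv M (Ne.isUnit hMdet)
  rw [risk, risk]
  congr 1
  refine lintegral_congr fun ω => ?_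
  congr 1
  set W : Matrix (Fin n) (Fin d) ℝ := Matrix.of ω.1 with hW
  have hdS : dMat S ω = W * M := rfl
  have hd1 : dMat (1 : Matrix (Fin d) (Fin d) ℝ) ω = W := by
    rw [dMat, msqrt_one, Matrix.mul_one]
  have hresp : resp S β ω = resp 1 (M *ᵥ β) ω := by
    rw [resp, resp, hdS, hd1, ← mulVec_mulVec]
  set y : Fin n → ℝ := resp 1 (M *ᵥ β) ω with hy
  set v : Fin d → ℝ := est y W 1 with hv
  have hest : est y (dMat S ω) S = M⁻¹ *ᵥ v := by
    have h := hequiv M hMunit y W 1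
    rw [Matrix.mul_one, hMH, hMM] at h
    rw [hdS, ← h]
  rw [hresp, hest]
  have hβ : (β : Fin d → ℝ) = M⁻¹ *ᵥ (M *ᵥ β) := by
    rw [mulVec_mulVec, hMinv, one_mulVec]
  have hdiff : M⁻¹ *ᵥ v - β = M⁻¹ *ᵥ (v - M *ᵥ β) := by
    rw [mulVec_sub]
    rw [← hβ]
  rw [hdiff, dot_conj]
  have hmid : (M⁻¹)ᵀ * S * M⁻¹ = 1 := by
    have h1 : S * M⁻¹ = M := by rw [← hMM, Matrix.mul_assoc, hMinv2, Matrix.mul_one]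
    rw [Matrix.transpose_nonsing_inv, hMH, Matrix.mul_assoc, h1, hMinv]
  rw [hmid]
  rw [hd1, ← hv]


theorem riskB {n d : ℕ} (b : Fin d → ℝ) (σ2 : ℝ≥0) (hσ : 0 < σ2)
    (est : (Fin n → ℝ) → Matrix (Fin n) (Fin d) ℝ →
      Matrix (Fin d) (Fin d) ℝ → (Fin d → ℝ))
    (hequiv : ∀ (A : Matrix (Fin d) (Fin d) ℝ), IsUnit A →
      ∀ (y : Fin n → ℝ) (X : Matrix (Fin n) (Fin d) ℝ) (T : Matrix (Fin d) (Fin d) ℝ),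
        A⁻¹ *ᵥ est y X T = est y (X * A) (A * T * Aᵀ))
    (hscale : ∀ (t : ℝ), t ≠ 0 →
      ∀ (y : Fin n → ℝ) (X : Matrix (Fin n) (Fin d) ℝ) (T : Matrix (Fin d) (Fin d) ℝ),
        est y X T = est (t • y) (t • X) ((t ^ 2) • T)) :
    risk n 1 b σ2 (fun y X => est y X 1) =
      risk n 1 ((Real.sqrt σ2)⁻¹ • b) 1 (fun y X => est y X 1) := by
  set σ : ℝ := Real.sqrt σ2 with hσdef
  have hσ0 : 0 < σ := Real.sqrt_pos.mpr (by exact_mod_cast hσ)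
  have hσ' : σ ≠ 0 := hσ0.ne'
  have hσσ : σ * σ = (σ2 : ℝ) := Real.mul_self_sqrt σ2.2
  set b' : Fin d → ℝ := σ⁻¹ • b with hb'
  have hσb' : σ • b' = b := by rw [hb', smul_smul, mul_inv_cancel₀ hσ', one_smul]
  have hscaleE : ∀ (y : Fin n → ℝ) (W : Matrix (Fin n) (Fin d) ℝ),
      est (σ • y) W 1 = σ • est y W 1 := by
    intro y W
    have h1 := hscale σ⁻¹ (inv_ne_zero hσ') (σ • y) W 1
    rw [smul_smul, inv_mul_cancel₀ hσ', one_smul] at h1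
    have hunit1 : (σ⁻¹ • (1 : Matrix (Fin d) (Fin d) ℝ)) * (σ • 1) = 1 := by
      rw [smul_mul_smul_comm, inv_mul_cancel₀ hσ', Matrix.one_mul, one_smul]
    have hunit : IsUnit (σ⁻¹ • (1 : Matrix (Fin d) (Fin d) ℝ)) := by
      refine (Matrix.isUnit_iff_isUnit_det _).mpr ?_
      rw [Matrix.det_smul, Matrix.det_one, mul_one]
      exact (pow_ne_zero _ (inv_ne_zero hσ')).isUnit
    have h2 := hequiv (σ⁻¹ • (1 : Matrix (Fin d) (Fin d) ℝ)) hunit y W 1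
    rw [Matrix.inv_eq_right_inv hunit1] at h2
    have e1 : W * (σ⁻¹ • (1 : Matrix (Fin d) (Fin d) ℝ)) = σ⁻¹ • W := by
      rw [Matrix.mul_smul, Matrix.mul_one]
    have e2 : (σ⁻¹ • (1 : Matrix (Fin d) (Fin d) ℝ)) * 1 *
        (σ⁻¹ • (1 : Matrix (Fin d) (Fin d) ℝ))ᵀ =
        (σ⁻¹ ^ 2) • (1 : Matrix (Fin d) (Fin d) ℝ) := by
      rw [Matrix.mul_one, Matrix.transpose_smul, Matrix.transpose_one, smul_mul_smul_comm,
        Matrix.one_mul, ← sq]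
    have e3 : (σ • (1 : Matrix (Fin d) (Fin d) ℝ)) *ᵥ est y W 1 = σ • est y W 1 := by
      rw [smul_mulVec, one_mulVec]
    rw [e1, e2] at h2
    rw [h1, ← h2, e3]
  rw [risk, risk]
  rw [lintegral_P_scale σ2 hσ]
  have hpt : ∀ ω : Omega n d,
      ENNReal.ofReal
        (((fun y X => est y X 1) (resp 1 b (ω.1, fun i => σ * ω.2 i))
            (dMat 1 (ω.1, fun i => σ * ω.2 i)) - b) ⬝ᵥ
          ((1 : Matrix (Fin d) (Fin d) ℝ) *ᵥ
            ((fun y X => est y X 1) (resp 1 b (ω.1, fun i => σ * ω.2 i))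
              (dMat 1 (ω.1, fun i => σ * ω.2 i)) - b))) =
      (σ2 : ℝ≥0∞) * ENNReal.ofReal
        (((fun y X => est y X 1) (resp 1 b' ω) (dMat 1 ω) - b') ⬝ᵥ
          ((1 : Matrix (Fin d) (Fin d) ℝ) *ᵥ
            ((fun y X => est y X 1) (resp 1 b' ω) (dMat 1 ω) - b'))) := by
    intro ω
    simp only []
    set W : Matrix (Fin n) (Fin d) ℝ := Matrix.of ω.1 with hW
    have hd1 : dMat (1 : Matrix (Fin d) (Fin d) ℝ) (ω.1, fun i => σ * ω.2 i) = W := by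
      rw [dMat, msqrt_one, Matrix.mul_one]
    have hd2 : dMat (1 : Matrix (Fin d) (Fin d) ℝ) ω = W := by
      rw [dMat, msqrt_one, Matrix.mul_one]
    have hy : resp 1 b (ω.1, fun i => σ * ω.2 i) = σ • resp 1 b' ω := by
      rw [resp, resp, hd1, hd2]
      show W *ᵥ b + σ • ω.2 = σ • (W *ᵥ b' + ω.2)
      rw [smul_add, ← mulVec_smul, hσb']
    rw [hy, hd1, hd2, hscaleE]
    set v : Fin d → ℝ := est (resp 1 b' ω) W 1 with hv
    have hdiff : σ • v - b = σ • (v - b') := by rw [smul_sub, hσb']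
    rw [hdiff, one_mulVec, one_mulVec, smul_dotProduct, dotProduct_smul, smul_eq_mul,
      smul_eq_mul, ← mul_assoc, hσσ,
      ENNReal.ofReal_mul (by positivity), ENNReal.ofReal_coe_nnreal]
  rw [lintegral_congr hpt, lintegral_const_mul' _ _ ENNReal.coe_ne_top, ← mul_assoc,
    ENNReal.inv_mul_cancel (by exact_mod_cast hσ.ne') ENNReal.coe_ne_top, one_mul]
  rw [ENNReal.coe_one, inv_one, one_mul]


theorem riskC {n d : ℕ} (Q : Matrix (Fin d) (Fin d) ℝ) (hQ1 : Qᵀ * Q = 1) (w : Fin d → ℝ)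
    (est : (Fin n → ℝ) → Matrix (Fin n) (Fin d) ℝ →
      Matrix (Fin d) (Fin d) ℝ → (Fin d → ℝ))
    (hequiv : ∀ (A : Matrix (Fin d) (Fin d) ℝ), IsUnit A →
      ∀ (y : Fin n → ℝ) (X : Matrix (Fin n) (Fin d) ℝ) (T : Matrix (Fin d) (Fin d) ℝ),
        A⁻¹ *ᵥ est y X T = est y (X * A) (A * T * Aᵀ)) :
    risk n 1 (Q *ᵥ w) 1 (fun y X => est y X 1) = risk n 1 w 1 (fun y X => est y X 1) := by
  have hQ2 : Q * Qᵀ = 1 := mul_eq_one_comm.mpr hQ1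
  have hQTinv : (Qᵀ)⁻¹ = Q := Matrix.inv_eq_left_inv hQ2
  have hQTunit : IsUnit Qᵀ := by
    refine (Matrix.isUnit_iff_isUnit_det _).mpr ?_
    have h := congrArg Matrix.det hQ1
    rw [Matrix.det_mul, Matrix.det_one] at h
    exact IsUnit.of_mul_eq_one _ h
  rw [risk, risk]
  rw [lintegral_P_rot Q hQ1]
  congr 1
  refine lintegral_congr fun ω => ?_
  congr 1
  set W : Matrix (Fin n) (Fin d) ℝ := Matrix.of ω.1 with hW
  have hof : Matrix.of (fun i => Q *ᵥ ω.1 i) = W * Qᵀ := by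
    ext i j
    simp only [Matrix.of_apply, Matrix.mul_apply, Matrix.transpose_apply, mulVec, dotProduct]
    exact Finset.sum_congr rfl fun k _ => mul_comm _ _
  have hd1 : dMat (1 : Matrix (Fin d) (Fin d) ℝ) ((fun i => Q *ᵥ ω.1 i), ω.2) = W * Qᵀ := by
    rw [dMat, msqrt_one, Matrix.mul_one]
    exact hof
  have hd2 : dMat (1 : Matrix (Fin d) (Fin d) ℝ) ω = W := by
    rw [dMat, msqrt_one, Matrix.mul_one]
  have hy : resp 1 (Q *ᵥ w) ((fun i => Q *ᵥ ω.1 i), ω.2) = resp 1 w ω := by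
    rw [resp, resp, hd1, hd2, mulVec_mulVec, Matrix.mul_assoc, hQ1, Matrix.mul_one]
  rw [hy, hd1, hd2]
  set y : Fin n → ℝ := resp 1 w ω with hyy
  set v : Fin d → ℝ := est y W 1 with hv
  have hest : est y (W * Qᵀ) 1 = Q *ᵥ v := by
    have h := hequiv Qᵀ hQTunit y W 1
    rw [Matrix.mul_one, Matrix.transpose_transpose, hQ1, hQTinv] at h
    exact h.symm
  rw [hest]
  have hdiff : Q *ᵥ v - Q *ᵥ w = Q *ᵥ (v - w) := (mulVec_sub Q v w).symm
  rw [hdiff, dot_conj, Matrix.mul_one, hQ1]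


lemma msqrt_dot {d : ℕ} (S : Matrix (Fin d) (Fin d) ℝ) (hS : S.PosDef) (β : Fin d → ℝ) :
    (msqrt S *ᵥ β) ⬝ᵥ (msqrt S *ᵥ β) = β ⬝ᵥ (S *ᵥ β) := by
  set M := msqrt S with hMdef
  have hpsd := hS.posSemidef
  have hMM : M * M = S := (msqrt_props S hpsd).1
  have hMH : Mᵀ = M := (msqrt_props S hpsd).2
  have h := dot_conj M 1 β
  rw [one_mulVec, Matrix.mul_one, hMH, hMM] at h
  exact h

lemma vred_dot {d : ℕ} (S : Matrix (Fin d) (Fin d) ℝ) (hS : S.PosDef) (β : Fin d → ℝ)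
    (σ2 : ℝ≥0) :
    ((Real.sqrt σ2)⁻¹ • (msqrt S *ᵥ β)) ⬝ᵥ ((Real.sqrt σ2)⁻¹ • (msqrt S *ᵥ β)) =
      snr S β σ2 := by
  set sq : ℝ := Real.sqrt σ2 with hsq
  have hss : sq * sq = (σ2 : ℝ) := Real.mul_self_sqrt σ2.2
  rw [smul_dotProduct, dotProduct_smul, smul_eq_mul, smul_eq_mul, msqrt_dot S hS β, snr,
    div_eq_mul_inv, ← hss, mul_inv]
  ring

lemma snr_nonneg {d : ℕ} (S : Matrix (Fin d) (Fin d) ℝ) (hS : S.PosDef) (β : Fin d → ℝ)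
    (σ2 : ℝ≥0) : 0 ≤ snr S β σ2 := by
  rw [snr]
  apply div_nonneg _ σ2.2
  have := hS.posSemidef.dotProduct_mulVec_nonneg β
  simpa using this

/-- If `β̂(y, X, Σ)` is LS (linearly equivariant and scale invariant), then
`R_V(β̂) = R_{V_u}(β̂)` where `V_u` corresponds to `Σ = I`, `σ² = 1`, `β = η u` for any fixed
unit vector `u`; in particular the risk depends on `(β, Σ, σ²)` only through `η²`. -/
theorem statement1 (n d : ℕ) (S : Matrix (Fin d) (Fin d) ℝ) (hS : S.PosDef)
    (β : Fin d → ℝ) (σ2 : ℝ≥0) (hσ : 0 < σ2)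
    (est : (Fin n → ℝ) → Matrix (Fin n) (Fin d) ℝ →
      Matrix (Fin d) (Fin d) ℝ → (Fin d → ℝ))
    (hequiv : ∀ (A : Matrix (Fin d) (Fin d) ℝ), IsUnit A →
      ∀ (y : Fin n → ℝ) (X : Matrix (Fin n) (Fin d) ℝ) (T : Matrix (Fin d) (Fin d) ℝ),
        A⁻¹ *ᵥ est y X T = est y (X * A) (A * T * Aᵀ))
    (hscale : ∀ (t : ℝ), t ≠ 0 →
      ∀ (y : Fin n → ℝ) (X : Matrix (Fin n) (Fin d) ℝ) (T : Matrix (Fin d) (Fin d) ℝ),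
        est y X T = est (t • y) (t • X) ((t ^ 2) • T)) :
    (∀ u : Fin d → ℝ, sqnorm u = 1 →
      risk n S β σ2 (fun y X => est y X S) =
        risk n 1 (Real.sqrt (snr S β σ2) • u) 1 (fun y X => est y X 1)) ∧
    (∀ (S' : Matrix (Fin d) (Fin d) ℝ), S'.PosDef →
      ∀ (β' : Fin d → ℝ) (σ2' : ℝ≥0), 0 < σ2' → snr S' β' σ2' = snr S β σ2 →
        risk n S' β' σ2' (fun y X => est y X S') = risk n S β σ2 (fun y X => est y X S)) := by
  have hred : ∀ (S0 : Matrix (Fin d) (Fin d) ℝ), S0.PosDef → ∀ (β0 : Fin d → ℝ) (σ0 : ℝ≥0),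
      0 < σ0 → risk n S0 β0 σ0 (fun y X => est y X S0) =
        risk n 1 ((Real.sqrt σ0)⁻¹ • (msqrt S0 *ᵥ β0)) 1 (fun y X => est y X 1) := by
    intro S0 hS0 β0 σ0 hσ0
    rw [riskA S0 hS0 β0 σ0 est hequiv]
    exact riskB (msqrt S0 *ᵥ β0) σ0 hσ0 est hequiv hscale
  set v : Fin d → ℝ := (Real.sqrt σ2)⁻¹ • (msqrt S *ᵥ β) with hvdef
  have hvv : v ⬝ᵥ v = snr S β σ2 := vred_dot S hS β σ2
  constructor
  · intro u hu
    have huu : u ⬝ᵥ u = 1 := by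
      rw [← hu, sqnorm, dotProduct]
      exact Finset.sum_congr rfl fun i _ => (sq (u i)).symm
    have hv1 : (Real.sqrt (snr S β σ2) • u) ⬝ᵥ (Real.sqrt (snr S β σ2) • u) =
        snr S β σ2 := by
      rw [smul_dotProduct, dotProduct_smul, smul_eq_mul, smul_eq_mul, huu, mul_one,
        Real.mul_self_sqrt (snr_nonneg S hS β σ2)]
    obtain ⟨Q, hQ, hQv⟩ := householder (hv1.trans hvv.symm)
    rw [hred S hS β σ2 hσ, ← hQv]
    exact (riskC Q hQ v est hequiv).symm
  · intro S' hS' β' σ2' hσ2' hsnr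
    set v' : Fin d → ℝ := (Real.sqrt σ2')⁻¹ • (msqrt S' *ᵥ β') with hv'def
    have hv'v' : v' ⬝ᵥ v' = v ⬝ᵥ v := by
      rw [hvv, vred_dot S' hS' β' σ2', hsnr]
    obtain ⟨Q, hQ, hQv⟩ := householder hv'v'
    rw [hred S hS β σ2 hσ, hred S' hS' β' σ2' hσ2', ← hv'def, ← hQv]
    exact riskC Q hQ v est hequiv

end Dicker

end
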